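/- Define V_i^s = sup_{V ∈ M} limsup_{t→∞} F^t(V)_i and V^s = max_{i=1,…,N} V_i^s (the maximal asymptotic membrane potential). If V^s < θ, then: (a) V^s = max_i I_i^ext/(1−γ); (b) for every V ∈ M, F^t(V) converges to the fixed point V* with V*_i = I_i^ext/(1−γ); (c) Ω = {V*}; and (d) the distance of Ω to the singularity set equals θ − V^s, i.e., inf_{t ≥ 0} min_i |F^t(V*)_i − θ| = θ − V^s (neural death regime). -/

import Mathlib

open Finset Filter

attribute [local instance] Classical.propDecidable

noncomputable def Z (θ x : ℝ) : ℝ := if θ ≤ x then 1 else 0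

noncomputable def F (N : ℕ) (W : Fin N → Fin N → ℝ) (Iext : Fin N → ℝ) (θ γ : ℝ)
    (V : Fin N → ℝ) : Fin N → ℝ :=
  fun i => γ * V i * (1 - Z θ (V i)) + (∑ j, W i j * Z θ (V j)) + Iext i

noncomputable def Vmin (N : ℕ) (W : Fin N → Fin N → ℝ) (Iext : Fin N → ℝ) (γ : ℝ) : ℝ :=
  min 0 ((1 - γ)⁻¹ *
    ⨅ i : Fin N, ((∑ j ∈ Finset.univ.filter (fun j => W i j < 0), W i j) + Iext i))

noncomputable def Vmax (N : ℕ) (W : Fin N → Fin N → ℝ) (Iext : Fin N → ℝ) (γ : ℝ) : ℝ :=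
  max 0 ((1 - γ)⁻¹ *
    ⨆ i : Fin N, ((∑ j ∈ Finset.univ.filter (fun j => 0 < W i j), W i j) + Iext i))

private lemma ultra_eq {α : Type*} [Fintype α] (U : Ultrafilter ℕ) (f : ℕ → α) :
    ∃ a, {n | f n = a} ∈ U := by
  by_contra h
  push_neg at h
  have h2 : ∀ a : α, {n | f n = a}ᶜ ∈ U := fun a => Ultrafilter.compl_mem_iff_notMem.2 (h a)
  have h3 : (⋂ a : α, {n | f n = a}ᶜ) ∈ U := Filter.iInter_mem.2 h2
  have h4 : (⋂ a : α, {n | f n = a}ᶜ) = ∅ := by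
    ext n
    simp only [Set.mem_iInter, Set.mem_compl_iff, Set.mem_setOf_eq, Set.mem_empty_iff_false,
      iff_false, not_forall, not_not]
    exact ⟨f n, rfl⟩
  rw [h4] at h3
  exact Filter.empty_notMem (↑U : Filter ℕ) h3

-- step lemma
private lemma F_pat_step {N : ℕ} (W : Fin N → Fin N → ℝ) (Iext : Fin N → ℝ) (θ γ : ℝ)
    (X : Fin N → ℝ) (p : Fin N → Bool) (hp : ∀ j, θ ≤ X j ↔ p j = true) (i : Fin N) :
    F N W Iext θ γ X i =
      (if p i = true then 0 else γ * X i) +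
        ((∑ j, W i j * (if p j = true then (1:ℝ) else 0)) + Iext i) := by
  have hZ : ∀ j, Z θ (X j) = (if p j = true then (1:ℝ) else 0) := by
    intro j
    by_cases h : p j = true
    · rw [if_pos h, Z, if_pos ((hp j).2 h)]
    · rw [if_neg h, Z, if_neg (fun hc => h ((hp j).1 hc))]
  simp only [F]
  rw [Finset.sum_congr rfl (fun j _ => by rw [hZ j]), hZ i]
  by_cases h : p i = true
  · rw [if_pos h, if_pos h]; ring
  · rw [if_neg h, if_neg h]; ring

private lemma F_all_lt {N : ℕ} (W : Fin N → Fin N → ℝ) (Iext : Fin N → ℝ) (θ γ : ℝ)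
    (X : Fin N → ℝ) (hX : ∀ j, X j < θ) (i : Fin N) :
    F N W Iext θ γ X i = γ * X i + Iext i := by
  have := F_pat_step W Iext θ γ X (fun _ => false)
    (fun j => by simp [not_le.2 (hX j)]) i
  simpa using this

/-- neural death regime: if the maximal asymptotic membrane potential
`V^s = max_i sup_{V ∈ M} limsup_t F^t(V)_i` is below `θ`, then `V^s = max_i I_i^ext/(1−γ)`,
every trajectory converges to the fixed point `V*` with `V*_i = I_i^ext/(1−γ)`,
`Ω = {V*}`, and the distance of `Ω` to the singularity set equals `θ − V^s`. -/
theorem stmt19 (N : ℕ) (hN : 0 < N) (W : Fin N → Fin N → ℝ) (Iext : Fin N → ℝ)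
    (θ γ : ℝ) (hθ : 0 < θ) (hγ0 : 0 ≤ γ) (hγ1 : γ < 1)
    (M : Set (Fin N → ℝ))
    (hM : M = Set.Icc (fun _ => Vmin N W Iext γ) (fun _ => Vmax N W Iext γ))
    (Ω : Set (Fin N → ℝ)) (hΩ : Ω = ⋂ t : ℕ, (F N W Iext θ γ)^[t] '' M)
    (Vsi : Fin N → ℝ)
    (hVsi : ∀ i, Vsi i =
      sSup ((fun V => limsup (fun t : ℕ => (F N W Iext θ γ)^[t] V i) atTop) '' M))
    (Vs : ℝ) (hVs : Vs = ⨆ i, Vsi i)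
    (hVsθ : Vs < θ)
    (Vstar : Fin N → ℝ) (hVstar : Vstar = fun i => Iext i / (1 - γ)) :
    Vs = (⨆ i, Iext i / (1 - γ)) ∧
    (∀ V ∈ M, Tendsto (fun t : ℕ => (F N W Iext θ γ)^[t] V) atTop (nhds Vstar)) ∧
    Ω = {Vstar} ∧
    (⨅ (t : ℕ) (i : Fin N), |(F N W Iext θ γ)^[t] Vstar i - θ|) = θ - Vs := by
  haveI : Nonempty (Fin N) := Fin.pos_iff_nonempty.1 hN
  have hpos : (0:ℝ) < 1 - γ := by linarith
  have hVst : ∀ i, Vstar i = Iext i / (1 - γ) := fun i => by rw [hVstar]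
  have hIVst : ∀ i, Iext i = (1 - γ) * Vstar i := by
    intro i; rw [hVst i]; field_simp
  have hVmin0 : Vmin N W Iext γ ≤ 0 := min_le_left _ _
  have hVmax0 : 0 ≤ Vmax N W Iext γ := le_max_left _ _
  have hmemM : ∀ V : Fin N → ℝ,
      V ∈ M ↔ ∀ j, Vmin N W Iext γ ≤ V j ∧ V j ≤ Vmax N W Iext γ := by
    intro V
    rw [hM, Set.mem_Icc]
    constructor
    · rintro ⟨h1, h2⟩ j; exact ⟨h1 j, h2 j⟩
    · intro h; exact ⟨fun j => (h j).1, fun j => (h j).2⟩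
  -- Z bounds
  have hZ0 : ∀ x, 0 ≤ Z θ x := by
    intro x; rw [Z]; split <;> norm_num
  have hZ1 : ∀ x, Z θ x ≤ 1 := by
    intro x; rw [Z]; split <;> norm_num
  -- sum bounds
  have hsum_ub : ∀ (V : Fin N → ℝ) (i : Fin N),
      (∑ j, W i j * Z θ (V j)) ≤ ∑ j ∈ Finset.univ.filter (fun j => 0 < W i j), W i j := by
    intro V i
    rw [Finset.sum_filter]
    apply Finset.sum_le_sum
    intro j _
    by_cases h : 0 < W i j
    · rw [if_pos h]
      exact mul_le_of_le_one_right h.le (hZ1 _)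
    · rw [if_neg h]
      exact mul_nonpos_iff.2 (Or.inr ⟨le_of_not_gt h, hZ0 _⟩)
  have hsum_lb : ∀ (V : Fin N → ℝ) (i : Fin N),
      (∑ j ∈ Finset.univ.filter (fun j => W i j < 0), W i j) ≤ ∑ j, W i j * Z θ (V j) := by
    intro V i
    rw [Finset.sum_filter]
    apply Finset.sum_le_sum
    intro j _
    by_cases h : W i j < 0
    · rw [if_pos h]
      calc W i j = W i j * 1 := by ring
        _ ≤ W i j * Z θ (V j) := mul_le_mul_of_nonpos_left (hZ1 _) h.le
    · rw [if_neg h]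
      exact mul_nonneg (le_of_not_gt h) (hZ0 _)
  have hub_iSup : ∀ i, ((∑ j ∈ Finset.univ.filter (fun j => 0 < W i j), W i j) + Iext i)
      ≤ (1 - γ) * Vmax N W Iext γ := by
    intro i
    have h1 : ((∑ j ∈ Finset.univ.filter (fun j => 0 < W i j), W i j) + Iext i)
        ≤ ⨆ i' : Fin N, ((∑ j ∈ Finset.univ.filter (fun j => 0 < W i' j), W i' j) + Iext i') :=
      le_ciSup (f := fun i' : Fin N => ((∑ j ∈ Finset.univ.filter (fun j => 0 < W i' j), W i' j) + Iext i'))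
        (Set.Finite.bddAbove (Set.finite_range _)) i
    have h2 : (1 - γ)⁻¹ *
        (⨆ i' : Fin N, ((∑ j ∈ Finset.univ.filter (fun j => 0 < W i' j), W i' j) + Iext i'))
        ≤ Vmax N W Iext γ := le_max_right _ _
    have h3 := mul_le_mul_of_nonneg_left h2 hpos.le
    calc ((∑ j ∈ Finset.univ.filter (fun j => 0 < W i j), W i j) + Iext i)
        ≤ ⨆ i' : Fin N, ((∑ j ∈ Finset.univ.filter (fun j => 0 < W i' j), W i' j) + Iext i') := h1
      _ = (1 - γ) * ((1 - γ)⁻¹ *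
          (⨆ i' : Fin N, ((∑ j ∈ Finset.univ.filter (fun j => 0 < W i' j), W i' j) + Iext i'))) := by
          field_simp
      _ ≤ (1 - γ) * Vmax N W Iext γ := h3
  have hlb_iInf : ∀ i, (1 - γ) * Vmin N W Iext γ
      ≤ ((∑ j ∈ Finset.univ.filter (fun j => W i j < 0), W i j) + Iext i) := by
    intro i
    have h1 : (⨅ i' : Fin N, ((∑ j ∈ Finset.univ.filter (fun j => W i' j < 0), W i' j) + Iext i'))
        ≤ ((∑ j ∈ Finset.univ.filter (fun j => W i j < 0), W i j) + Iext i) :=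
      ciInf_le (f := fun i' : Fin N => ((∑ j ∈ Finset.univ.filter (fun j => W i' j < 0), W i' j) + Iext i'))
        (Set.Finite.bddBelow (Set.finite_range _)) i
    have h2 : Vmin N W Iext γ ≤ (1 - γ)⁻¹ *
        (⨅ i' : Fin N, ((∑ j ∈ Finset.univ.filter (fun j => W i' j < 0), W i' j) + Iext i')) :=
      min_le_right _ _
    have h3 := mul_le_mul_of_nonneg_left h2 hpos.le
    calc (1 - γ) * Vmin N W Iext γ
        ≤ (1 - γ) * ((1 - γ)⁻¹ *
          (⨅ i' : Fin N, ((∑ j ∈ Finset.univ.filter (fun j => W i' j < 0), W i' j) + Iext i'))) := h3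
      _ = ⨅ i' : Fin N, ((∑ j ∈ Finset.univ.filter (fun j => W i' j < 0), W i' j) + Iext i') := by
          field_simp
      _ ≤ _ := h1
  -- invariance
  have hFmem : ∀ V : Fin N → ℝ,
      (∀ j, Vmin N W Iext γ ≤ V j ∧ V j ≤ Vmax N W Iext γ) →
      ∀ i, Vmin N W Iext γ ≤ F N W Iext θ γ V i ∧ F N W Iext θ γ V i ≤ Vmax N W Iext γ := by
    intro V hV i
    have hfirst_ub : γ * V i * (1 - Z θ (V i)) ≤ γ * Vmax N W Iext γ := by
      by_cases h : θ ≤ V i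
      · rw [Z, if_pos h]
        simpa using mul_nonneg hγ0 hVmax0
      · rw [Z, if_neg h]
        have : γ * V i ≤ γ * Vmax N W Iext γ := mul_le_mul_of_nonneg_left (hV i).2 hγ0
        simpa using this
    have hfirst_lb : γ * Vmin N W Iext γ ≤ γ * V i * (1 - Z θ (V i)) := by
      by_cases h : θ ≤ V i
      · rw [Z, if_pos h]
        simpa using mul_nonpos_iff.2 (Or.inl ⟨hγ0, hVmin0⟩)
      · rw [Z, if_neg h]
        have : γ * Vmin N W Iext γ ≤ γ * V i := mul_le_mul_of_nonneg_left (hV i).1 hγ0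
        simpa using this
    constructor
    · have := hsum_lb V i
      have := hlb_iInf i
      simp only [F]
      nlinarith
    · have := hsum_ub V i
      have := hub_iSup i
      simp only [F]
      nlinarith
  have horb : ∀ V ∈ M, ∀ (t : ℕ) (j : Fin N),
      Vmin N W Iext γ ≤ (F N W Iext θ γ)^[t] V j ∧
      (F N W Iext θ γ)^[t] V j ≤ Vmax N W Iext γ := by
    intro V hV t
    induction t with
    | zero => simpa using (hmemM V).1 hV
    | succ t ih =>
        intro j
        rw [Function.iterate_succ_apply']
        exact hFmem _ ih j
  have horbM : ∀ V ∈ M, ∀ t : ℕ, (F N W Iext θ γ)^[t] V ∈ M := by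
    intro V hV t
    exact (hmemM _).2 (horb V hV t)
  -- boundedness of orbits
  have hBu : ∀ V ∈ M, ∀ i, IsBoundedUnder (· ≤ ·) atTop (fun t : ℕ => (F N W Iext θ γ)^[t] V i) := by
    intro V hV i
    exact Filter.isBoundedUnder_of ⟨Vmax N W Iext γ, fun (t : ℕ) => (horb V hV t i).2⟩
  have hBl : ∀ V ∈ M, ∀ i, IsBoundedUnder (· ≥ ·) atTop (fun t : ℕ => (F N W Iext θ γ)^[t] V i) := by
    intro V hV i
    exact Filter.isBoundedUnder_of ⟨Vmin N W Iext γ, fun (t : ℕ) => (horb V hV t i).1⟩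
  have hlimsup_ub : ∀ V ∈ M, ∀ i,
      limsup (fun t : ℕ => (F N W Iext θ γ)^[t] V i) atTop ≤ Vmax N W Iext γ := by
    intro V hV i
    exact limsup_le_of_le ((hBl V hV i).isCoboundedUnder_le)
      (Filter.Eventually.of_forall (fun (t : ℕ) => (horb V hV t i).2))
  have hbddimg : ∀ i, BddAbove
      ((fun V => limsup (fun t : ℕ => (F N W Iext θ γ)^[t] V i) atTop) '' M) := by
    intro i
    refine ⟨Vmax N W Iext γ, ?_⟩
    rintro y ⟨v, hv, rfl⟩
    exact hlimsup_ub v hv i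
  have hlimVsi : ∀ V ∈ M, ∀ i,
      limsup (fun t : ℕ => (F N W Iext θ γ)^[t] V i) atTop ≤ Vsi i := by
    intro V hV i
    rw [hVsi i]
    exact le_csSup (hbddimg i) ⟨V, hV, rfl⟩
  have hVsi_le : ∀ i, Vsi i ≤ Vs := by
    intro i
    rw [hVs]
    exact le_ciSup (Set.Finite.bddAbove (Set.finite_range _)) i
  have hlimVs : ∀ V ∈ M, ∀ i,
      limsup (fun t : ℕ => (F N W Iext θ γ)^[t] V i) atTop ≤ Vs :=
    fun V hV i => le_trans (hlimVsi V hV i) (hVsi_le i)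
  -- eventually subthreshold
  have hdeath : ∀ V ∈ M, ∃ T : ℕ, ∀ t, T ≤ t → ∀ i, (F N W Iext θ γ)^[t] V i < θ := by
    intro V hV
    have hev : ∀ᶠ t in (atTop : Filter ℕ), ∀ i, (F N W Iext θ γ)^[t] V i < θ := by
      rw [Filter.eventually_all]
      intro i
      exact Filter.eventually_lt_of_limsup_lt (lt_of_le_of_lt (hlimVs V hV i) hVsθ) (hBu V hV i)
    obtain ⟨T, hT⟩ := eventually_atTop.1 hev
    exact ⟨T, fun t ht i => hT t ht i⟩
  -- geometric formula
  have hgeo : ∀ (V : Fin N → ℝ) (T : ℕ), (∀ t, T ≤ t → ∀ i, (F N W Iext θ γ)^[t] V i < θ) →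
      ∀ (m : ℕ) (i : Fin N), (F N W Iext θ γ)^[T + m] V i
        = Vstar i + γ ^ m * ((F N W Iext θ γ)^[T] V i - Vstar i) := by
    intro V T hT m
    induction m with
    | zero => intro i; simp
    | succ m ih =>
        intro i
        have heq : T + (m + 1) = (T + m) + 1 := rfl
        rw [heq, Function.iterate_succ_apply',
          F_all_lt W Iext θ γ _ (hT (T + m) (by omega)) i, ih i, hIVst i]
        ring
  -- coordinatewise convergence
  have htc : ∀ V ∈ M, ∀ i, Tendsto (fun t : ℕ => (F N W Iext θ γ)^[t] V i) atTop (nhds (Vstar i)) := by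
    intro V hV i
    obtain ⟨T, hT⟩ := hdeath V hV
    have hev : (fun t : ℕ => Vstar i + γ ^ (t - T) * ((F N W Iext θ γ)^[T] V i - Vstar i))
        =ᶠ[atTop] (fun t : ℕ => (F N W Iext θ γ)^[t] V i) := by
      rw [Filter.eventuallyEq_iff_exists_mem]
      refine ⟨{t | T ≤ t}, mem_atTop T, ?_⟩
      intro t ht
      have ht' : T ≤ t := ht
      have h2 : T + (t - T) = t := by omega
      have h := hgeo V T hT (t - T) i
      rw [h2] at h
      simpa using h.symm
    have h0 : Tendsto (fun t : ℕ => γ ^ (t - T)) atTop (nhds 0) :=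
      (tendsto_pow_atTop_nhds_zero_of_lt_one hγ0 hγ1).comp (tendsto_sub_atTop_nat T)
    have h1 : Tendsto (fun t : ℕ => Vstar i + γ ^ (t - T) * ((F N W Iext θ γ)^[T] V i - Vstar i))
        atTop (nhds (Vstar i)) := by
      have := (h0.mul_const ((F N W Iext θ γ)^[T] V i - Vstar i)).const_add (Vstar i)
      simpa using this
    exact h1.congr' hev
  have hpartb : ∀ V ∈ M, Tendsto (fun t : ℕ => (F N W Iext θ γ)^[t] V) atTop (nhds Vstar) := by
    intro V hV
    rw [tendsto_pi_nhds]
    exact htc V hV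
  -- M is nonempty
  have hMne : (fun _ : Fin N => Vmin N W Iext γ) ∈ M := by
    rw [hmemM]
    intro j
    exact ⟨le_refl _, le_trans hVmin0 hVmax0⟩
  -- Vsi computation
  have hVsi_eq : ∀ i, Vsi i = Vstar i := by
    intro i
    have himg : ((fun V => limsup (fun t : ℕ => (F N W Iext θ γ)^[t] V i) atTop) '' M)
        = {Vstar i} := by
      ext y
      simp only [Set.mem_image, Set.mem_singleton_iff]
      constructor
      · rintro ⟨v, hv, rfl⟩
        exact (htc v hv i).limsup_eq
      · rintro rfl
        exact ⟨_, hMne, (htc _ hMne i).limsup_eq⟩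
    rw [hVsi i, himg, csSup_singleton]
  have hVs_eq : Vs = ⨆ i, Vstar i := by
    rw [hVs]
    exact iSup_congr hVsi_eq
  have hVstar_le : ∀ i, Vstar i ≤ Vs := by
    intro i
    rw [hVs_eq]
    exact le_ciSup (Set.Finite.bddAbove (Set.finite_range _)) i
  have hVstar_lt : ∀ i, Vstar i < θ := fun i => lt_of_le_of_lt (hVstar_le i) hVsθ
  have hIlt : ∀ i, Iext i < (1 - γ) * θ := by
    intro i
    rw [hIVst i]
    exact mul_lt_mul_of_pos_left (hVstar_lt i) hpos
  have hfix : F N W Iext θ γ Vstar = Vstar := by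
    funext i
    rw [F_all_lt W Iext θ γ _ hVstar_lt i, hIVst i]
    ring
  have hVstarM : Vstar ∈ M := by
    rw [hmemM]
    intro j
    constructor
    · have h1 := hlb_iInf j
      have h2 : (∑ k ∈ Finset.univ.filter (fun k => W j k < 0), W j k) ≤ 0 :=
        Finset.sum_nonpos (fun k hk => (Finset.mem_filter.1 hk).2.le)
      have h3 : (1 - γ) * Vmin N W Iext γ ≤ Iext j := by linarith
      rw [hIVst j] at h3
      nlinarith
    · have h1 := hub_iSup j
      have h2 : (0:ℝ) ≤ ∑ k ∈ Finset.univ.filter (fun k => 0 < W j k), W j k :=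
        Finset.sum_nonneg (fun k hk => (Finset.mem_filter.1 hk).2.le)
      have h3 : Iext j ≤ (1 - γ) * Vmax N W Iext γ := by linarith
      rw [hIVst j] at h3
      nlinarith
  -- part (a)
  have goalA : Vs = ⨆ i, Iext i / (1 - γ) := by
    rw [hVs_eq]
    exact iSup_congr hVst
  -- part (d)
  have goalD : (⨅ (t : ℕ) (i : Fin N), |(F N W Iext θ γ)^[t] Vstar i - θ|) = θ - Vs := by
    have hit : ∀ t : ℕ, (F N W Iext θ γ)^[t] Vstar = Vstar :=
      fun t => Function.iterate_fixed hfix t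
    have habs : ∀ i, |Vstar i - θ| = θ - Vstar i := by
      intro i
      rw [abs_of_nonpos (by linarith [hVstar_lt i]), neg_sub]
    obtain ⟨i0, -, hmax⟩ := Finset.exists_max_image Finset.univ Vstar Finset.univ_nonempty
    have hsup_eq : (⨆ i, Vstar i) = Vstar i0 :=
      le_antisymm (ciSup_le fun j => hmax j (Finset.mem_univ j))
        (le_ciSup (Set.Finite.bddAbove (Set.finite_range _)) i0)
    have hinn : (⨅ i, |Vstar i - θ|) = θ - Vs := by
      simp only [habs]
      rw [hVs_eq, hsup_eq]
      refine le_antisymm (ciInf_le (Set.Finite.bddBelow (Set.finite_range _)) i0) ?_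
      exact le_ciInf (fun j => by have := hmax j (Finset.mem_univ j); linarith)
    calc (⨅ (t : ℕ) (i : Fin N), |(F N W Iext θ γ)^[t] Vstar i - θ|)
        = ⨅ (_ : ℕ), (⨅ i, |Vstar i - θ|) := by simp only [hit]
      _ = ⨅ i, |Vstar i - θ| := ciInf_const
      _ = θ - Vs := hinn
  -- part (c), easy inclusion
  have hsup : ({Vstar} : Set (Fin N → ℝ)) ⊆ Ω := by
    intro y hy
    rw [Set.mem_singleton_iff] at hy
    rw [hy, hΩ]
    exact Set.mem_iInter.2 (fun t => ⟨Vstar, hVstarM, Function.iterate_fixed hfix t⟩)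
  -- part (c), hard inclusion
  have hsub : Ω ⊆ ({Vstar} : Set (Fin N → ℝ)) := by
    intro x hx
    simp only [Set.mem_singleton_iff]
    by_contra hxne
    obtain ⟨i0, hi0⟩ := Function.ne_iff.1 hxne
    have hδ : 0 < |x i0 - Vstar i0| := abs_pos.2 (sub_ne_zero.2 hi0)
    obtain ⟨K, hK⟩ : ∃ K : ℕ,
        γ ^ K * (Vmax N W Iext γ - Vmin N W Iext γ) < |x i0 - Vstar i0| := by
      have h0 : Tendsto (fun k : ℕ => γ ^ k * (Vmax N W Iext γ - Vmin N W Iext γ))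
          atTop (nhds 0) := by
        simpa using (tendsto_pow_atTop_nhds_zero_of_lt_one hγ0 hγ1).mul_const
          (Vmax N W Iext γ - Vmin N W Iext γ)
      exact (h0.eventually_lt_const hδ).exists
    rw [hΩ] at hx
    have hxt : ∀ t : ℕ, ∃ V ∈ M, (F N W Iext θ γ)^[t] V = x := by
      intro t
      obtain ⟨V, hVM, hVx⟩ := Set.mem_iInter.1 hx t
      exact ⟨V, hVM, hVx⟩
    -- persistent witnesses of every horizon
    have hpers : ∀ n : ℕ, ∃ V ∈ M, ∀ s, s ≤ n → ∃ i, θ ≤ (F N W Iext θ γ)^[s] V i := by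
      intro n
      obtain ⟨V, hVM, hVx⟩ := hxt (n + K)
      refine ⟨V, hVM, ?_⟩
      intro s hsn
      by_contra hcon
      push_neg at hcon
      have hprop : ∀ m : ℕ, (∀ i, (F N W Iext θ γ)^[s+m] V i < θ) ∧
          (∀ i, (F N W Iext θ γ)^[s+m] V i
            = Vstar i + γ ^ m * ((F N W Iext θ γ)^[s] V i - Vstar i)) := by
        intro m
        induction m with
        | zero => exact ⟨by simpa using hcon, fun i => by simp⟩
        | succ m ih =>
            have h1 : s + (m+1) = (s+m) + 1 := rfl
            constructor
            · intro i
              rw [h1, Function.iterate_succ_apply', F_all_lt W Iext θ γ _ ih.1 i]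
              have h2 := ih.1 i
              have h3 := hIlt i
              have h4 : γ * (F N W Iext θ γ)^[s+m] V i ≤ γ * θ :=
                mul_le_mul_of_nonneg_left h2.le hγ0
              linarith
            · intro i
              rw [h1, Function.iterate_succ_apply', F_all_lt W Iext θ γ _ ih.1 i,
                ih.2 i, hIVst i]
              ring
      have hKm : K ≤ n + K - s := by omega
      have heq := (hprop (n + K - s)).2 i0
      have hms : s + (n + K - s) = n + K := by omega
      rw [hms, hVx] at heq
      have hc1 := horb V hVM s i0
      have hc2 := (hmemM Vstar).1 hVstarM i0
      have habs : |(F N W Iext θ γ)^[s] V i0 - Vstar i0|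
          ≤ Vmax N W Iext γ - Vmin N W Iext γ :=
        abs_le.2 ⟨by linarith [hc1.1, hc2.2], by linarith [hc1.2, hc2.1]⟩
      have hδeq : |x i0 - Vstar i0|
          = γ ^ (n+K-s) * |(F N W Iext θ γ)^[s] V i0 - Vstar i0| := by
        rw [heq, add_sub_cancel_left, abs_mul, abs_of_nonneg (pow_nonneg hγ0 _)]
      have hγm : γ ^ (n+K-s) ≤ γ ^ K := pow_le_pow_of_le_one hγ0 hγ1.le hKm
      have hD0 : (0:ℝ) ≤ Vmax N W Iext γ - Vmin N W Iext γ := by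
        linarith [le_trans hVmin0 hVmax0]
      have hfin : |x i0 - Vstar i0| ≤ γ ^ K * (Vmax N W Iext γ - Vmin N W Iext γ) := by
        rw [hδeq]
        calc γ ^ (n+K-s) * |(F N W Iext θ γ)^[s] V i0 - Vstar i0|
            ≤ γ ^ (n+K-s) * (Vmax N W Iext γ - Vmin N W Iext γ) :=
              mul_le_mul_of_nonneg_left habs (pow_nonneg hγ0 _)
          _ ≤ γ ^ K * (Vmax N W Iext γ - Vmin N W Iext γ) :=
              mul_le_mul_of_nonneg_right hγm hD0
      linarith
    choose Vseq hVseqM hVseqP using hpers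
    -- ultrafilter diagonalization on firing patterns
    set U := Ultrafilter.of (atTop : Filter ℕ) with hUdef
    have hUat : ∀ n : ℕ, {m : ℕ | n ≤ m} ∈ U := fun n =>
      Ultrafilter.of_le (atTop : Filter ℕ) (mem_atTop n)
    have hηex : ∀ s : ℕ, ∃ p : Fin N → Bool,
        {n : ℕ | (fun j => if θ ≤ (F N W Iext θ γ)^[s] (Vseq n) j then true else false) = p}
          ∈ U := fun s => ultra_eq U _
    choose η hηU using hηex
    have hwit : ∀ H : ℕ, ∃ n : ℕ, H ≤ n ∧ ∀ s, s ≤ H →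
        (fun j => if θ ≤ (F N W Iext θ γ)^[s] (Vseq n) j then true else false) = η s := by
      intro H
      have hmem : ({m : ℕ | H ≤ m} ∩ ⋂ s ∈ Finset.range (H+1),
          {n : ℕ | (fun j => if θ ≤ (F N W Iext θ γ)^[s] (Vseq n) j then true else false)
            = η s}) ∈ U :=
        Filter.inter_mem (hUat H)
          ((Filter.biInter_finset_mem (Finset.range (H+1))).2 (fun s _ => hηU s))
      obtain ⟨n, hn⟩ := Filter.nonempty_of_mem (f := (U : Filter ℕ)) hmem
      exact ⟨n, hn.1, fun s hs => Set.mem_iInter₂.1 hn.2 s (Finset.mem_range.2 (by omega))⟩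
    choose wit hwitH hwitP using hwit
    have hpat : ∀ (H s : ℕ), s ≤ H → ∀ j,
        (θ ≤ (F N W Iext θ γ)^[s] (Vseq (wit H)) j ↔ η s j = true) := by
      intro H s hs j
      have h := congr_fun (hwitP H s hs) j
      constructor
      · intro hj; rw [← h, if_pos hj]
      · intro hj
        by_contra hc
        rw [← h, if_neg hc] at hj
        exact Bool.false_ne_true hj
    have hηne : ∀ s : ℕ, ∃ i, η s i = true := by
      intro s
      obtain ⟨i, hi⟩ := hVseqP (wit s) s (hwitH s)
      exact ⟨i, (hpat s s le_rfl i).1 hi⟩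
    have hAinf : ∃ i : Fin N, {s : ℕ | η s i = true}.Infinite := by
      by_contra hcon
      push_neg at hcon
      have hfin : ∀ i : Fin N, {s : ℕ | η s i = true}.Finite :=
        fun i => hcon i
      have huniv : (⋃ i : Fin N, {s : ℕ | η s i = true}) = Set.univ := by
        ext s
        simp only [Set.mem_iUnion, Set.mem_setOf_eq, Set.mem_univ, iff_true]
        exact hηne s
      have hfu := Set.finite_iUnion hfin
      rw [huniv] at hfu
      exact Set.infinite_univ hfu
    obtain ⟨s0, hs0pos, hfirst⟩ : ∃ s0 : ℕ, 1 ≤ s0 ∧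
        ∀ i : Fin N, (∃ s, η s i = true) → ∃ r, r < s0 ∧ η r i = true := by
      refine ⟨1 + ∑ i', sInf {s' | η s' i' = true}, by omega, ?_⟩
      intro i hi
      refine ⟨sInf {s | η s i = true}, ?_, Nat.sInf_mem hi⟩
      have h1 : sInf {s | η s i = true} ≤ ∑ i', sInf {s' | η s' i' = true} :=
        Finset.single_le_sum (f := fun i' => sInf {s' | η s' i' = true})
          (fun _ _ => Nat.zero_le _) (Finset.mem_univ i)
      omega
    -- word-determined agreement of ever-firing coordinates
    have hAGR : ∀ (i : Fin N), (∃ s, η s i = true) → ∀ (s : ℕ), s0 ≤ s →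
        ∀ (H H' : ℕ), s ≤ H → s ≤ H' →
        (F N W Iext θ γ)^[s] (Vseq (wit H)) i = (F N W Iext θ γ)^[s] (Vseq (wit H')) i := by
      intro i hiA s hs H H' hH hH'
      obtain ⟨r0, hr0lt, hr0⟩ := hfirst i hiA
      have hr0le : r0 ≤ s - 1 := by omega
      have hRfire : η (Nat.findGreatest (fun q => η q i = true) (s-1)) i = true :=
        Nat.findGreatest_spec (P := fun q => η q i = true) hr0le hr0
      set R := Nat.findGreatest (fun q => η q i = true) (s-1) with hRdef
      have hRle : R ≤ s - 1 := Nat.findGreatest_le _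
      have hRmax : ∀ q, R < q → q ≤ s - 1 → ¬(η q i = true) :=
        fun q h1 h2 => Nat.findGreatest_is_greatest h1 h2
      have hreset : ∀ Hh : ℕ, s ≤ Hh → (F N W Iext θ γ)^[R+1] (Vseq (wit Hh)) i
          = (∑ j, W i j * (if η R j = true then (1:ℝ) else 0)) + Iext i := by
        intro Hh hHh
        have hp := hpat Hh R (by omega)
        rw [Function.iterate_succ_apply', F_pat_step W Iext θ γ _ (η R) hp i,
          if_pos hRfire, zero_add]
      have hind : ∀ q, R + 1 ≤ q → q ≤ s →
          (F N W Iext θ γ)^[q] (Vseq (wit H)) i = (F N W Iext θ γ)^[q] (Vseq (wit H')) i := by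
        intro q hq
        induction q, hq using Nat.le_induction with
        | base =>
            intro _
            rw [hreset H hH, hreset H' hH']
        | succ q hq ih =>
            intro hqs
            have hql : q ≤ s - 1 := by omega
            have hsil : ¬(η q i = true) := hRmax q (by omega) hql
            have hpH := hpat H q (by omega)
            have hpH' := hpat H' q (by omega)
            rw [Function.iterate_succ_apply', Function.iterate_succ_apply',
              F_pat_step W Iext θ γ _ (η q) hpH i, F_pat_step W Iext θ γ _ (η q) hpH' i,
              if_neg hsil, if_neg hsil, ih (by omega)]
      exact hind s (by omega) le_rfl
    -- the immortal initial condition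
    set y0 : Fin N → ℝ := fun i => if (∃ s, η s i = true)
        then (F N W Iext θ γ)^[s0] (Vseq (wit s0)) i else Vmin N W Iext γ with hy0def
    have hy0M : y0 ∈ M := by
      rw [hmemM]
      intro j
      by_cases hj : (∃ s, η s j = true)
      · have hb := horb (Vseq (wit s0)) (hVseqM (wit s0)) s0 j
        simp only [hy0def, if_pos hj]
        exact hb
      · simp only [hy0def, if_neg hj]
        exact ⟨le_refl _, le_trans hVmin0 hVmax0⟩
    -- main comparison induction
    have hMAIN : ∀ k : ℕ, ∀ H : ℕ, s0 + k ≤ H →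
        (∀ i : Fin N, (∃ s, η s i = true) →
          (F N W Iext θ γ)^[k] y0 i = (F N W Iext θ γ)^[s0+k] (Vseq (wit H)) i) ∧
        (∀ i : Fin N, ¬(∃ s, η s i = true) →
          (F N W Iext θ γ)^[k] y0 i ≤ (F N W Iext θ γ)^[s0+k] (Vseq (wit H)) i ∧
          (F N W Iext θ γ)^[k] y0 i < θ) := by
      intro k
      induction k with
      | zero =>
          intro H hH
          constructor
          · intro i hiA
            simp only [Function.iterate_zero_apply, Nat.add_zero]
            have hy : y0 i = (F N W Iext θ γ)^[s0] (Vseq (wit s0)) i := by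
              simp only [hy0def, if_pos hiA]
            rw [hy]
            exact hAGR i hiA s0 le_rfl s0 H le_rfl (by omega)
          · intro i hiA
            simp only [Function.iterate_zero_apply, Nat.add_zero]
            have hy : y0 i = Vmin N W Iext γ := by
              simp only [hy0def, if_neg hiA]
            rw [hy]
            exact ⟨(horb _ (hVseqM _) s0 i).1, lt_of_le_of_lt hVmin0 hθ⟩
      | succ k ih =>
          intro H hH
          have hH' : s0 + k ≤ H := by omega
          have IH := ih H hH'
          have hpatk : ∀ j, θ ≤ (F N W Iext θ γ)^[k] y0 j ↔ η (s0+k) j = true := by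
            intro j
            by_cases hj : (∃ s, η s j = true)
            · rw [IH.1 j hj]
              exact hpat H (s0+k) hH' j
            · constructor
              · intro hcon
                exact absurd hcon (not_le.2 (IH.2 j hj).2)
              · intro hfire
                exact absurd ⟨s0+k, hfire⟩ hj
          have hpatH : ∀ j, θ ≤ (F N W Iext θ γ)^[s0+k] (Vseq (wit H)) j
              ↔ η (s0+k) j = true := hpat H (s0+k) hH'
          have hstep1 : ∀ i, (F N W Iext θ γ)^[k+1] y0 i =
              (if η (s0+k) i = true then 0 else γ * (F N W Iext θ γ)^[k] y0 i) +
              ((∑ j, W i j * (if η (s0+k) j = true then (1:ℝ) else 0)) + Iext i) := by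
            intro i
            rw [Function.iterate_succ_apply']
            exact F_pat_step W Iext θ γ _ (η (s0+k)) hpatk i
          have hstep2 : ∀ i, (F N W Iext θ γ)^[s0+(k+1)] (Vseq (wit H)) i =
              (if η (s0+k) i = true then 0
                else γ * (F N W Iext θ γ)^[s0+k] (Vseq (wit H)) i) +
              ((∑ j, W i j * (if η (s0+k) j = true then (1:ℝ) else 0)) + Iext i) := by
            intro i
            have h1 : s0 + (k+1) = (s0+k) + 1 := rfl
            rw [h1, Function.iterate_succ_apply']
            exact F_pat_step W Iext θ γ _ (η (s0+k)) hpatH i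
          constructor
          · intro i hiA
            rw [hstep1 i, hstep2 i]
            by_cases hf : η (s0+k) i = true
            · rw [if_pos hf, if_pos hf]
            · rw [if_neg hf, if_neg hf, IH.1 i hiA]
          · intro i hiA
            have hηi : ¬(η (s0+k) i = true) := fun h => hiA ⟨_, h⟩
            have hηi' : ¬(η (s0+(k+1)) i = true) := fun h => hiA ⟨_, h⟩
            have hle : (F N W Iext θ γ)^[k+1] y0 i
                ≤ (F N W Iext θ γ)^[s0+(k+1)] (Vseq (wit H)) i := by
              rw [hstep1 i, hstep2 i, if_neg hηi, if_neg hηi]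
              have hmul := mul_le_mul_of_nonneg_left (IH.2 i hiA).1 hγ0
              linarith
            refine ⟨hle, lt_of_le_of_lt hle ?_⟩
            have hp := hpat H (s0+(k+1)) (by omega) i
            exact not_le.1 (fun hc => hηi' (hp.1 hc))
    -- conclusion : some coordinate of the orbit of y0 is ≥ θ infinitely often
    obtain ⟨istar, histar⟩ := hAinf
    have histarA : ∃ s, η s istar = true := by
      obtain ⟨s, hs⟩ := histar.nonempty
      exact ⟨s, hs⟩
    have hfreq : ∃ᶠ k in (atTop : Filter ℕ), θ ≤ (F N W Iext θ γ)^[k] y0 istar := by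
      rw [Filter.frequently_atTop]
      intro a
      obtain ⟨s, hsmem, hslt⟩ := histar.exists_gt (s0 + a)
      refine ⟨s - s0, by omega, ?_⟩
      have hk : s0 + (s - s0) = s := by omega
      have hm := (hMAIN (s - s0) s (by omega)).1 istar histarA
      rw [hk] at hm
      rw [hm]
      exact (hpat s s le_rfl istar).2 hsmem
    have hlimf := Filter.le_limsup_of_frequently_le hfreq (hBu y0 hy0M istar)
    have hlimv := hlimVs y0 hy0M istar
    linarith
  have hΩeq : Ω = ({Vstar} : Set (Fin N → ℝ)) := Set.Subset.antisymm hsub hsup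
  exact ⟨goalA, hpartb, hΩeq, goalD⟩
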